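/- arXiv:1110.1214 — 2 statements merged into one kernel-verified Lean document; each statement's English description precedes it below -/
import Mathlib

section
/- For any random variable X and any positive random variable M with E[M] = 1, Jensen's inequality gives −(1/α)·log E[e^{−αX}] ≤ E_Q[X] + (1/α)·E[M·log M], where Q is the probability with density M with respect to P and α > 0. -/
open MeasureTheory Real

/-- For any random variable `X` and positive `M` with `E[M] = 1`,
Jensen's inequality gives
`-(1/α) log E[e^{-αX}] ≤ E_Q[X] + (1/α) E[M log M]`, where `dQ/dP = M`. -/
theorem stmt_16 {Ω : Type*} [MeasurableSpace Ω] (P : Measure Ω) [IsProbabilityMeasure P]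
    (α : ℝ) (hα : 0 < α)
    (X M : Ω → ℝ) (hXm : Measurable X) (hMm : Measurable M)
    (hMpos : ∀ᵐ ω ∂P, 0 < M ω)
    (hM1 : ∫ ω, M ω ∂P = 1)
    (Q : Measure Ω) (hQ : Q = P.withDensity (fun ω => ENNReal.ofReal (M ω)))
    (hint1 : Integrable (fun ω => Real.exp (-α * X ω)) P)
    (hint2 : Integrable (fun ω => M ω * Real.log (M ω)) P)
    (hint3 : Integrable X Q) :
    -(1/α) * Real.log (∫ ω, Real.exp (-α * X ω) ∂P)
      ≤ (∫ ω, X ω ∂Q) + (1/α) * ∫ ω, M ω * Real.log (M ω) ∂P := by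
  have hMn : Measurable (fun ω => (M ω).toNNReal) := hMm.real_toNNReal
  have hQ' : Q = P.withDensity (fun ω => ((M ω).toNNReal : ENNReal)) := hQ
  -- transfer of integrals from Q to P
  have key : ∀ g : Ω → ℝ, ∫ ω, g ω ∂Q = ∫ ω, M ω * g ω ∂P := by
    intro g
    rw [hQ', integral_withDensity_eq_integral_smul hMn g]
    refine integral_congr_ae ?_
    filter_upwards [hMpos] with ω hω
    simp [NNReal.smul_def, Real.coe_toNNReal _ hω.le]
  have keyInt : ∀ g : Ω → ℝ, Integrable (fun ω => M ω * g ω) P → Integrable g Q := by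
    intro g hg
    rw [hQ', integrable_withDensity_iff_integrable_smul hMn]
    refine hg.congr ?_
    filter_upwards [hMpos] with ω hω
    simp [NNReal.smul_def, Real.coe_toNNReal _ hω.le]
  -- M is integrable
  have hMint : Integrable M P := by
    by_contra h
    rw [integral_undef h] at hM1
    norm_num at hM1
  -- Q is a probability measure
  have hQprob : IsProbabilityMeasure Q := by
    constructor
    rw [hQ, withDensity_apply _ MeasurableSet.univ, setLIntegral_univ,
      ← ofReal_integral_eq_lintegral_ofReal hMint (hMpos.mono fun ω h => h.le), hM1]
    simp
  -- positivity of Z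
  set Z := ∫ ω, Real.exp (-α * X ω) ∂P with hZdef
  have hZpos : 0 < Z := integral_exp_pos hint1
  -- a.e. positivity under Q
  have hac : Q ≪ P := hQ ▸ withDensity_absolutelyContinuous P _
  have hMposQ : ∀ᵐ ω ∂Q, 0 < M ω := hac.ae_le hMpos
  -- integrability of log M under Q, and its integral
  have hlogMint : Integrable (fun ω => Real.log (M ω)) Q := keyInt _ hint2
  have hlogMval : ∫ ω, Real.log (M ω) ∂Q = ∫ ω, M ω * Real.log (M ω) ∂P := key _
  -- the function u
  set u : Ω → ℝ := fun ω => Real.exp (-α * X ω) / (M ω * Z) with hu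
  have huint : Integrable u Q := by
    refine keyInt _ (Integrable.congr (hint1.div_const Z) ?_)
    filter_upwards [hMpos] with ω hω
    rw [hu]
    field_simp [hω.ne']
  have huval : ∫ ω, u ω ∂Q = 1 := by
    rw [key]
    have : ∫ ω, M ω * u ω ∂P = ∫ ω, Real.exp (-α * X ω) / Z ∂P := by
      refine integral_congr_ae ?_
      filter_upwards [hMpos] with ω hω
      rw [hu]
      field_simp [hω.ne']
    rw [this, integral_div, ← hZdef, div_self hZpos.ne']
  -- the function h and the key inequality
  set h : Ω → ℝ := fun ω => -α * X ω - Real.log (M ω) - Real.log Z with hh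
  have hAint : Integrable (fun ω => -α * X ω - Real.log (M ω)) Q :=
    (hint3.const_mul (-α)).sub hlogMint
  have hhint : Integrable h Q := hAint.sub (integrable_const _)
  have hptwise : ∀ᵐ ω ∂Q, h ω ≤ u ω - 1 := by
    filter_upwards [hMposQ] with ω hω
    have hMZ : 0 < M ω * Z := mul_pos hω hZpos
    have hupos : 0 < u ω := div_pos (Real.exp_pos _) hMZ
    have hlog : Real.log (u ω) = h ω := by
      rw [hu, Real.log_div (Real.exp_pos _).ne' hMZ.ne', Real.log_exp,
        Real.log_mul hω.ne' hZpos.ne', hh]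
      ring
    calc h ω = Real.log (u ω) := hlog.symm
      _ ≤ u ω - 1 := Real.log_le_sub_one_of_pos hupos
  have hmono : ∫ ω, h ω ∂Q ≤ ∫ ω, (u ω - 1) ∂Q :=
    integral_mono_ae hhint (huint.sub (integrable_const 1)) hptwise
  have hrhs : ∫ ω, (u ω - 1) ∂Q = 0 := by
    rw [integral_sub huint (integrable_const 1), huval, integral_const]
    simp
  have hlhs : ∫ ω, h ω ∂Q = -α * (∫ ω, X ω ∂Q) - (∫ ω, M ω * Real.log (M ω) ∂P)
      - Real.log Z := by
    have e1 : ∫ ω, h ω ∂Q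
        = ∫ ω, (-α * X ω - Real.log (M ω)) ∂Q - ∫ ω, (Real.log Z) ∂Q := by
      simp only [hh]
      exact integral_sub hAint (integrable_const _)
    have e2 : ∫ ω, (-α * X ω - Real.log (M ω)) ∂Q
        = ∫ ω, -α * X ω ∂Q - ∫ ω, Real.log (M ω) ∂Q :=
      integral_sub (hint3.const_mul (-α)) hlogMint
    rw [e1, e2, integral_const_mul, hlogMval, integral_const]
    simp
  have h2 : -Real.log Z ≤ α * (∫ ω, X ω ∂Q) + ∫ ω, M ω * Real.log (M ω) ∂P := by
    rw [hlhs, hrhs] at hmono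
    linarith
  have h3 := mul_le_mul_of_nonneg_left h2 (le_of_lt (by positivity : (0:ℝ) < 1/α))
  have e : (1/α) * (α * (∫ ω, X ω ∂Q) + ∫ ω, M ω * Real.log (M ω) ∂P)
      = (∫ ω, X ω ∂Q) + (1/α) * ∫ ω, M ω * Real.log (M ω) ∂P := by
    field_simp
  rw [e] at h3
  linarith
end

section
/- With r(ε) = u(ε)/l(ε) where l = (μ̄−λ̄)/α, u = (μ̄+λ̄)/((1−ε)α), and λ̄ = (3μ̄²/4)^{1/3}·ε^{1/3} + O(ε), the relative turnover ShT(ε) = (σ²/2)·[(1−2μ̄)/(r^{1−2μ̄}−1) + (2μ̄−1)/(r^{2μ̄−1}−1)] satisfies ShT(ε) = (σ²/2)·μ̄·(3μ̄²/4)^{−1/3}·ε^{−1/3} + O(ε^{1/3}) as ε ↓ 0. -/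
open Real Filter Asymptotics Topology

lemma coth_aux (a t : ℝ) (ha : a ≠ 0) (ht : 0 < t) (hat : |a * t| ≤ 1) :
    |a * (Real.exp (a*t) + 1) / (Real.exp (a*t) - 1) - 2 / t| ≤ 6 * a^2 * t := by
  set s := a * t with hs_def
  have hs : s ≠ 0 := mul_ne_zero ha ht.ne'
  have hsabs : 0 < |s| := abs_pos.mpr hs
  set R := Real.exp s with hR_def
  have hRpos : 0 < R := Real.exp_pos s
  have hR1 : R ≠ 1 := by
    intro h
    exact hs (Real.exp_injective (by rw [Real.exp_zero]; exact h))
  -- lower bound for |R - 1|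
  have hE : |s|/3 ≤ |R - 1| := by
    rcases lt_or_gt_of_ne hs with hneg | hpos
    · -- s < 0
      have h2 : R ≥ Real.exp (-1) := by
        apply Real.exp_le_exp.mpr
        have := abs_le.mp hat
        linarith [this.1]
      have hexp3 : Real.exp 1 ≤ 3 :=
        le_trans (le_of_lt Real.exp_one_lt_d9) (by norm_num)
      have hmul : Real.exp (-1) * Real.exp 1 = 1 := by
        rw [← Real.exp_add]; norm_num
      have h3 : Real.exp (-1) ≥ 1/3 := by
        nlinarith [Real.exp_pos (-1), Real.exp_pos 1]
      have h4' : R⁻¹ ≥ 1 - s := by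
        rw [← Real.exp_neg]
        linarith [Real.add_one_le_exp (-s)]
      have h4 : 1 - R ≥ (-s) * R := by
        have hh := mul_le_mul_of_nonneg_left h4' hRpos.le
        rw [mul_inv_cancel₀ hRpos.ne'] at hh
        nlinarith
      have h5 : 1 - R ≥ (-s) / 3 := by nlinarith
      rw [abs_of_neg hneg, abs_of_neg (by linarith : R - 1 < 0)]
      linarith
    · have h1 : R - 1 ≥ s := by linarith [Real.add_one_le_exp s]
      rw [abs_of_pos hpos]
      rw [abs_of_pos (by linarith : (0:ℝ) < R - 1)]
      linarith
  have hEne : R - 1 ≠ 0 := sub_ne_zero.mpr hR1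
  -- numerator bound
  have hRm := Real.exp_bound (x := s) (by linarith [abs_le.mp hat] : |s| ≤ 1) (n := 3) (by norm_num)
  have hsum : ∑ m ∈ Finset.range 3, s ^ m / (m.factorial : ℝ) = 1 + s + s^2/2 := by
    simp [Finset.sum_range_succ]
  rw [hsum] at hRm
  set Rm := R - (1 + s + s^2/2) with hRm_def
  have hRmb : |Rm| ≤ 2/9 * |s|^3 := by
    norm_num [Nat.factorial] at hRm
    linarith
  have hN : |s * (R + 1) - 2 * (R - 1)| ≤ 2 * |s|^3 := by
    have h1 : s * (R + 1) - 2 * (R - 1) = s^3/2 + (s - 2) * Rm := by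
      rw [hRm_def]; ring
    rw [h1]
    have h2 : |s - 2| ≤ 3 := by
      have := abs_le.mp (by linarith [abs_le.mp hat] : |s| ≤ 1)
      rw [abs_le]; constructor <;> linarith [this.1, this.2]
    calc |s^3/2 + (s-2)*Rm| ≤ |s^3/2| + |(s-2)*Rm| := abs_add_le _ _
      _ = |s|^3/2 + |s-2| * |Rm| := by rw [abs_mul, abs_div, abs_pow]; norm_num
      _ ≤ |s|^3/2 + 3 * (2/9 * |s|^3) := by
          have := mul_le_mul h2 hRmb (abs_nonneg Rm) (by norm_num : (0:ℝ) ≤ 3)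
          linarith
      _ ≤ 2 * |s|^3 := by nlinarith [pow_pos hsabs 3]
  -- rewrite expression
  have hkey : a * (R + 1) / (R - 1) - 2 / t = (s * (R + 1) - 2 * (R - 1)) / (t * (R - 1)) := by
    rw [hs_def]
    field_simp
  rw [hkey, abs_div]
  have hden : t * (|s|/3) ≤ |t * (R - 1)| := by
    rw [abs_mul t (R-1), abs_of_pos ht]
    exact mul_le_mul_of_nonneg_left hE ht.le
  have hdenpos : 0 < t * (|s|/3) := by positivity
  calc |s * (R + 1) - 2 * (R - 1)| / |t * (R - 1)|
      ≤ (2 * |s|^3) / (t * (|s|/3)) := by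
        exact div_le_div₀ (by positivity) hN hdenpos hden
    _ = 6 * a^2 * t := by
        have h1 : |s|^3 = |s| * s^2 := by
          rw [pow_succ, sq_abs]; ring
        rw [h1, hs_def]
        field_simp
        ring

lemma log_aux (p : ℝ) (h0 : 0 < p) (h1 : p ≤ 1/2) :
    |2 / Real.log (1+p) - (2/p + 1)| ≤ 9 * p := by
  set L := Real.log (1+p) with hL_def
  have hLpos : 0 < L := Real.log_pos (by linarith)
  have hLle : L ≤ p := by
    have := Real.log_le_sub_one_of_pos (by linarith : (0:ℝ) < 1 + p)
    linarith
  have hLge : 2*p/3 ≤ L := by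
    have h2 := Real.one_sub_inv_le_log_of_pos (by linarith : (0:ℝ) < 1 + p)
    have h3 : (1+p)⁻¹ ≤ 1/(1+p) := by rw [one_div]
    have h4 : 1 - 1/(1+p) = p/(1+p) := by field_simp; ring
    have h5 : p/(1+p) ≥ 2*p/3 := by
      rw [ge_iff_le, div_le_div_iff₀ (by norm_num) (by linarith)]
      nlinarith
    rw [hL_def]
    calc 2*p/3 ≤ p/(1+p) := h5
      _ = 1 - 1/(1+p) := h4.symm
      _ = 1 - (1+p)⁻¹ := by rw [one_div]
      _ ≤ Real.log (1+p) := h2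
  -- Taylor estimate: |L - (p - p^2/2)| ≤ 2*p^3
  have hT := Real.abs_log_sub_add_sum_range_le (x := -p) (by rw [abs_of_neg (by linarith)]; linarith) 2
  have hsum : ∑ i ∈ Finset.range 2, (-p) ^ (i + 1) / ((i:ℝ) + 1) = -p + p^2/2 := by
    simp [Finset.sum_range_succ]
    ring
  rw [hsum] at hT
  have h1mp : 1 - -p = 1 + p := by ring
  rw [h1mp] at hT
  have habs : |(-p)| = p := by rw [abs_of_neg (by linarith)]; ring
  rw [habs] at hT
  -- hT : |(-p + p^2/2) + L| ≤ p^3/(1-p)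
  set E := L - (p - p^2/2) with hE_def
  have hEb : |E| ≤ 2*p^3 := by
    have heq : E = (-p + p^2/2) + L := by rw [hE_def]; ring
    rw [heq]
    calc |(-p + p^2/2) + L| ≤ p^3/(1-p) := hT
      _ ≤ 2*p^3 := by
          rw [div_le_iff₀ (by linarith)]
          nlinarith [mul_nonneg (pow_pos h0 3).le (by linarith : (0:ℝ) ≤ 1 - 2*p)]
  have hkey : 2/L - (2/p + 1) = (2*p - (2+p)*L) / (p*L) := by
    field_simp
  rw [hkey, abs_div]
  have hM : |2*p - (2+p)*L| ≤ 6*p^3 := by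
    have heq : 2*p - (2+p)*L = p^3/2 - (2+p)*E := by rw [hE_def]; ring
    rw [heq]
    have h2p : |2+p| ≤ 5/2 := by rw [abs_of_pos (by linarith)]; linarith
    have hprod : |(2+p)*E| ≤ (5/2)*(2*p^3) := by
      rw [abs_mul]
      exact mul_le_mul h2p hEb (abs_nonneg E) (by norm_num)
    have htri : |p^3/2 - (2+p)*E| ≤ |p^3/2| + |(2+p)*E| := by
      simpa [sub_eq_add_neg, abs_neg] using abs_add_le (p^3/2) (-((2+p)*E))
    have habs2 : |p^3/2| = p^3/2 := abs_of_pos (by positivity)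
    rw [habs2] at htri
    nlinarith [pow_pos h0 3]
  have hden : p*(2*p/3) ≤ |p*L| := by
    rw [abs_mul p L, abs_of_pos h0, abs_of_pos hLpos]
    exact mul_le_mul_of_nonneg_left hLge h0.le
  calc |2*p - (2+p)*L| / |p*L| ≤ (6*p^3) / (p*(2*p/3)) := by
        exact div_le_div₀ (by positivity) hM (by positivity) hden
    _ = 9 * p := by field_simp; ring

set_option maxHeartbeats 4000000 in
/-- With `r(ε) = u(ε)/l(ε)`, `l = (μ̄-λ̄)/α`,
`u = (μ̄+λ̄)/((1-ε)α)`, and `λ̄(ε) = (3μ̄²/4)^{1/3}ε^{1/3} + O(ε)`, the relative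
turnover `ShT(ε) = (σ²/2)[(1-2μ̄)/(r^{1-2μ̄}-1) + (2μ̄-1)/(r^{2μ̄-1}-1)]`
satisfies `ShT(ε) = (σ²/2)μ̄(3μ̄²/4)^{-1/3}ε^{-1/3} + O(ε^{1/3})` as `ε ↓ 0`. -/
theorem stmt_19 (σ α μ : ℝ) (hσ : 0 < σ) (hα : 0 < α) (hμ : 0 < μ) (hμ' : μ ≠ 1/2)
    (lam : ℝ → ℝ)
    (hlam : (fun ε => lam ε - (3*μ^2/4) ^ ((1:ℝ)/3) * ε ^ ((1:ℝ)/3))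
      =O[𝓝[>] (0:ℝ)] (fun ε => ε))
    (hsmall : ∀ᶠ ε in 𝓝[>] (0:ℝ), 0 < lam ε ∧ lam ε < μ)
    (l u r ShT : ℝ → ℝ)
    (hl : l = fun ε => (μ - lam ε)/α)
    (hu : u = fun ε => (μ + lam ε)/((1 - ε)*α))
    (hr : r = fun ε => u ε / l ε)
    (hShT : ShT = fun ε => (σ^2/2) *
      ((1 - 2*μ)/(r ε ^ (1 - 2*μ) - 1) + (2*μ - 1)/(r ε ^ (2*μ - 1) - 1))) :
    (fun ε => ShT ε - (σ^2/2) * μ * (3*μ^2/4) ^ (-(1:ℝ)/3) * ε ^ (-(1:ℝ)/3))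
      =O[𝓝[>] (0:ℝ)] (fun ε => ε ^ ((1:ℝ)/3)) := by
  subst hl hu hr hShT
  set c : ℝ := (3*μ^2/4) ^ ((1:ℝ)/3) with hc_def
  have hc : 0 < c := Real.rpow_pos_of_pos (by positivity) _
  clear_value c
  set a : ℝ := 1 - 2*μ with ha_def
  have ha : a ≠ 0 := by
    rw [ha_def]; intro h; apply hμ'; linarith
  clear_value a
  rw [Asymptotics.isBigO_iff] at hlam ⊢
  obtain ⟨C₀, hC₀⟩ := hlam
  set C₁ : ℝ := |C₀| + 1 with hC1_def
  have hC₁pos : 0 < C₁ := by positivity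
  clear_value C₁
  have hlam' : ∀ᶠ ε in 𝓝[>] (0:ℝ), |lam ε - c * ε ^ ((1:ℝ)/3)| ≤ C₁ * ε := by
    filter_upwards [hC₀, self_mem_nhdsWithin] with ε h hε
    have hε' : (0:ℝ) < ε := hε
    rw [Real.norm_eq_abs, Real.norm_eq_abs, abs_of_pos hε'] at h
    have hCle : C₀ ≤ C₁ := by
      rw [hC1_def]; linarith [le_abs_self C₀]
    calc |lam ε - c * ε ^ ((1:ℝ)/3)| ≤ C₀ * ε := h
      _ ≤ C₁ * ε := mul_le_mul_of_nonneg_right hCle hε'.le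
  set C₃ : ℝ := 16*c/μ + 4 with hC3_def
  have hC₃pos : 0 < C₃ := by rw [hC3_def]; positivity
  clear_value C₃
  set C₂ : ℝ := 2*μ*C₁ + (c+μ)*μ with hC2_def
  have hC₂pos : 0 < C₂ := by rw [hC2_def]; positivity
  clear_value C₂
  set d₀ : ℝ := min (min (c/(2*C₁)) (μ/(4*c))) (min (1/2) (1/(2*C₃*(|a|+1)))) with hd0_def
  have hd₀ : 0 < d₀ := by
    apply lt_min (lt_min (by positivity) (by positivity)) (lt_min (by norm_num) (by positivity))
  have hd1 : d₀ ≤ c/(2*C₁) := (min_le_left _ _).trans (min_le_left _ _)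
  have hd2 : d₀ ≤ μ/(4*c) := (min_le_left _ _).trans (min_le_right _ _)
  have hd3 : d₀ ≤ 1/2 := (min_le_right _ _).trans (min_le_left _ _)
  have hd4 : d₀ ≤ 1/(2*C₃*(|a|+1)) := (min_le_right _ _).trans (min_le_right _ _)
  clear_value d₀
  have hm : Set.Ioo (0:ℝ) (d₀^3) ∈ 𝓝[>] (0:ℝ) :=
    Ioo_mem_nhdsGT_of_mem ⟨le_refl 0, by positivity⟩
  refine ⟨(σ^2/2) * (6*a^2*C₃ + 9*C₃ + C₂/c^2), ?_⟩
  filter_upwards [hlam', hsmall, hm] with ε hlamε hsm hεIoo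
  obtain ⟨hlam0, hlamlt⟩ := hsm
  have hε : 0 < ε := hεIoo.1
  have hεd : ε < d₀^3 := hεIoo.2
  set δ : ℝ := ε ^ ((1:ℝ)/3) with hδ_def
  have hδ : 0 < δ := Real.rpow_pos_of_pos hε _
  have hδ3 : δ^3 = ε := by
    rw [hδ_def, ← Real.rpow_natCast (ε ^ ((1:ℝ)/3)) 3, ← Real.rpow_mul hε.le]
    norm_num
  clear_value δ
  have hδd : δ < d₀ := by
    have h1 : δ^3 < d₀^3 := by rw [hδ3]; exact hεd
    exact lt_of_pow_lt_pow_left₀ 3 hd₀.le h1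
  have hδhalf : δ < 1/2 := lt_of_lt_of_le hδd hd3
  have hδ1 : δ ≤ 1 := by linarith
  have hδδ3 : δ^3 ≤ δ := by
    nlinarith [mul_nonneg (mul_nonneg hδ.le (by linarith : (0:ℝ) ≤ 1 - δ)) (by linarith : (0:ℝ) ≤ 1 + δ)]
  have hεδ : ε ≤ δ := by rw [← hδ3]; exact hδδ3
  have hεhalf : ε ≤ 1/2 := hεδ.trans hδhalf.le
  -- bounds on lam
  have hLam : |lam ε - c*δ| ≤ C₁*δ^3 := by
    rw [hδ3]; exact hlamε
  have hLam' := abs_le.mp hLam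
  have hC1δ : C₁*δ^2 ≤ c/2 := by
    have h1 : δ < c/(2*C₁) := lt_of_lt_of_le hδd hd1
    have h2 : C₁*δ < c/2 := by
      rw [lt_div_iff₀ (by positivity)] at h1
      nlinarith
    nlinarith
  have hlamlow : c*δ/2 ≤ lam ε := by nlinarith [hLam'.1]
  have hlamhigh : lam ε ≤ 2*c*δ := by nlinarith [hLam'.2]
  have hlammu2 : lam ε ≤ μ/2 := by
    have h1 : δ < μ/(4*c) := lt_of_lt_of_le hδd hd2
    rw [lt_div_iff₀ (by positivity)] at h1
    nlinarith
  -- rho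
  set D : ℝ := 2*lam ε + ε*(μ - lam ε) with hD_def
  have hD : 0 < D := by
    rw [hD_def]
    have : 0 < μ - lam ε := by linarith
    positivity
  clear_value D
  set W : ℝ := (1-ε)*(μ - lam ε) with hW_def
  have hW : 0 < W := by
    rw [hW_def]
    have h1 : 0 < 1 - ε := by linarith
    have h2 : 0 < μ - lam ε := by linarith
    positivity
  clear_value W
  set ρ : ℝ := D / W with hρ_def
  have hρ : 0 < ρ := div_pos hD hW
  clear_value ρ
  have hρδ : ρ ≤ C₃*δ := by
    have hDle : D ≤ 4*c*δ + μ*δ := by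
      rw [hD_def]
      have h1 : ε*(μ - lam ε) ≤ ε*μ := by nlinarith
      have h2 : ε*μ ≤ δ*μ := by nlinarith
      nlinarith
    have hWge : μ/4 ≤ W := by
      rw [hW_def]; nlinarith
    have h3 : ρ ≤ D/(μ/4) := by
      rw [hρ_def]
      exact div_le_div₀ hD.le (le_refl D) (by positivity) hWge
    have h4 : D/(μ/4) ≤ C₃*δ := by
      rw [div_le_iff₀ (by positivity), hC3_def]
      have heq : (16*c/μ + 4)*δ*(μ/4) = 4*c*δ + μ*δ := by field_simp; ring
      linarith [heq, hDle]
    linarith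
  have hC3δ : C₃*δ*(|a|+1) ≤ 1/2 := by
    have h1 : δ < 1/(2*C₃*(|a|+1)) := lt_of_lt_of_le hδd hd4
    rw [lt_div_iff₀ (by positivity)] at h1
    have h2 : C₃*δ*(|a|+1) * 2 = δ*(2*C₃*(|a|+1)) := by ring
    linarith [h1, h2]
  have hCδpos : 0 ≤ C₃*δ := mul_nonneg hC₃pos.le hδ.le
  have h8 : C₃*δ*(|a|+1) = |a| * (C₃*δ) + C₃*δ := by ring
  have h9 : 0 ≤ |a| * (C₃*δ) := mul_nonneg (abs_nonneg a) hCδpos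
  have hρhalf : ρ ≤ 1/2 := by linarith
  have harho : |a| * ρ ≤ 1/2 := by
    have h6 : |a| * ρ ≤ |a| * (C₃*δ) := mul_le_mul_of_nonneg_left hρδ (abs_nonneg a)
    linarith
  -- t = log(1+ρ)
  set t : ℝ := Real.log (1+ρ) with ht_def
  have ht : 0 < t := Real.log_pos (by linarith)
  have htρ : t ≤ ρ := by
    have := Real.log_le_sub_one_of_pos (show (0:ℝ) < 1+ρ by linarith)
    rw [ht_def]; linarith
  clear_value t
  have hat : |a*t| ≤ 1 := by
    rw [abs_mul, abs_of_pos ht]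
    have h1 : |a| * t ≤ |a| * ρ := mul_le_mul_of_nonneg_left htρ (abs_nonneg a)
    linarith
  have hp1 := coth_aux a t ha ht hat
  have hp2 := log_aux ρ hρ hρhalf
  rw [← ht_def] at hp2
  -- R and ShT value
  set R : ℝ := Real.exp (a*t) with hR_def
  have hRpos : 0 < R := Real.exp_pos _
  clear_value R
  have hR1 : R ≠ 1 := by
    rw [hR_def]
    intro h
    exact mul_ne_zero ha ht.ne' (Real.exp_injective (by rw [Real.exp_zero]; exact h))
  have hRm1 : R - 1 ≠ 0 := sub_ne_zero.mpr hR1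
  have hRinv : R⁻¹ - 1 ≠ 0 := by
    intro h
    apply hR1
    have h2 : R⁻¹ = 1 := by linarith
    field_simp at h2
    linarith
  -- r ε = 1 + ρ
  have hne1 : (1:ℝ) - ε ≠ 0 := by intro h; linarith
  have hne2 : μ - lam ε ≠ 0 := by intro h; linarith
  have hrε : (μ + lam ε)/((1-ε)*α) / ((μ - lam ε)/α) = 1 + ρ := by
    rw [hρ_def, hD_def, hW_def]
    field_simp
    ring
  have hpow1 : (1+ρ) ^ a = R := by
    rw [hR_def, Real.rpow_def_of_pos (by linarith : (0:ℝ) < 1+ρ), ← ht_def, mul_comm]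
  have hpow2 : (1+ρ) ^ (2*μ-1) = R⁻¹ := by
    have h1 : 2*μ-1 = -a := by rw [ha_def]; ring
    rw [h1, Real.rpow_neg (by linarith : (0:ℝ) ≤ 1+ρ), hpow1]
  have hShTval : a/((1+ρ) ^ a - 1) + (2*μ-1)/((1+ρ) ^ (2*μ-1) - 1)
      = a*(R+1)/(R-1) := by
    rw [hpow1, hpow2]
    have h1 : 2*μ-1 = -a := by rw [ha_def]; ring
    rw [h1]
    have hmulinv : R * R⁻¹ = 1 := mul_inv_cancel₀ hRpos.ne'
    have key : (-a)/(R⁻¹-1) = a*R/(R-1) := by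
      rw [div_eq_div_iff hRinv hRm1]
      linear_combination (-a) * hmulinv
    rw [key, ← add_div, show a + a*R = a*(R+1) by ring]
  -- S
  set S : ℝ := (2*μ - ε*(μ - lam ε)) / D with hS_def
  clear_value S
  have hS : 2/ρ + 1 = S := by
    rw [hS_def, hρ_def, div_div_eq_mul_div, div_add' _ _ _ hD.ne']
    congr 1
    rw [hW_def, hD_def]
    ring
  have hp3 : |S - μ/(c*δ)| ≤ (C₂/c^2)*δ := by
    have hcδ : (c*δ) ≠ 0 := (mul_pos hc hδ).ne'
    have heq3 : S - μ/(c*δ) = (-(2*μ)*(lam ε - c*δ) - (c*δ+μ)*(ε*(μ - lam ε))) / (c*δ*D) := by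
      rw [hS_def, div_sub_div _ _ hD.ne' hcδ,
        div_eq_div_iff (mul_ne_zero hD.ne' hcδ) (mul_ne_zero hcδ hD.ne')]
      rw [hD_def]
      ring
    rw [heq3, abs_div]
    have hnum : |(-(2*μ))*(lam ε - c*δ) - (c*δ+μ)*(ε*(μ - lam ε))| ≤ C₂*δ^3 := by
      have h1 : |(-(2*μ))*(lam ε - c*δ)| ≤ 2*μ*(C₁*δ^3) := by
        rw [abs_mul, abs_neg, abs_of_pos (by positivity : (0:ℝ) < 2*μ)]
        exact mul_le_mul_of_nonneg_left hLam (by positivity)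
      have h2 : |(c*δ+μ)*(ε*(μ - lam ε))| ≤ (c+μ)*(μ*δ^3) := by
        rw [abs_mul]
        have h2a : |c*δ+μ| ≤ c+μ := by
          rw [abs_of_pos (by positivity)]
          have : c*δ ≤ c*1 := mul_le_mul_of_nonneg_left hδ1 hc.le
          linarith
        have h2b : |ε*(μ - lam ε)| ≤ μ*δ^3 := by
          rw [abs_of_pos (mul_pos hε (by linarith : (0:ℝ) < μ - lam ε))]
          calc ε*(μ - lam ε) ≤ ε*μ := mul_le_mul_of_nonneg_left (by linarith) hε.le
            _ = μ*δ^3 := by rw [hδ3]; ring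
        exact mul_le_mul h2a h2b (abs_nonneg _) (by positivity)
      have htri : |(-(2*μ))*(lam ε - c*δ) - (c*δ+μ)*(ε*(μ - lam ε))|
          ≤ |(-(2*μ))*(lam ε - c*δ)| + |(c*δ+μ)*(ε*(μ - lam ε))| := by
        simpa [sub_eq_add_neg, abs_neg] using
          abs_add_le ((-(2*μ))*(lam ε - c*δ)) (-((c*δ+μ)*(ε*(μ - lam ε))))
      rw [hC2_def]
      linarith [htri, h1, h2]
    have hden : c^2*δ^2 ≤ |c*δ*D| := by
      rw [abs_of_pos (by positivity : (0:ℝ) < c*δ*D)]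
      rw [hD_def]
      have e1 : 0 ≤ ε*(μ - lam ε) := mul_nonneg hε.le (by linarith)
      have e2 : c*δ*(c*δ) ≤ c*δ*(2*lam ε + ε*(μ - lam ε)) :=
        mul_le_mul_of_nonneg_left (by linarith) (mul_pos hc hδ).le
      linarith [e2]
    calc |(-(2*μ))*(lam ε - c*δ) - (c*δ+μ)*(ε*(μ - lam ε))| / |c*δ*D|
        ≤ (C₂*δ^3)/(c^2*δ^2) := div_le_div₀ (by positivity) hnum (by positivity) hden
      _ = (C₂/c^2)*δ := by
          rw [div_mul_eq_mul_div,
            div_eq_div_iff ((by positivity : (0:ℝ) < c^2*δ^2)).ne' ((by positivity : (0:ℝ) < c^2)).ne']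
          ring
  -- target rewriting
  have htar : (σ^2/2) * μ * (3*μ^2/4) ^ (-(1:ℝ)/3) * ε ^ (-(1:ℝ)/3)
      = (σ^2/2) * (μ/(c*δ)) := by
    rw [show (-(1:ℝ)/3) = -((1:ℝ)/3) by ring, Real.rpow_neg (by positivity : (0:ℝ) ≤ 3*μ^2/4),
      Real.rpow_neg hε.le, ← hc_def, ← hδ_def]
    field_simp
  -- assemble
  rw [Real.norm_eq_abs, Real.norm_eq_abs, abs_of_pos hδ, hrε, htar]
  rw [hShTval]
  have hdecomp : (σ^2/2) * (a*(R+1)/(R-1)) - (σ^2/2) * (μ/(c*δ))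
      = (σ^2/2) * ((a*(R+1)/(R-1) - 2/t) + (2/t - (2/ρ + 1)) + (S - μ/(c*δ))) := by
    rw [hS]; ring
  rw [hdecomp]
  rw [abs_mul, abs_of_pos (by positivity : (0:ℝ) < σ^2/2)]
  have htri2 : |(a*(R+1)/(R-1) - 2/t) + (2/t - (2/ρ + 1)) + (S - μ/(c*δ))|
      ≤ |a*(R+1)/(R-1) - 2/t| + |2/t - (2/ρ + 1)| + |S - μ/(c*δ)| :=
    (abs_add_le _ _).trans (by gcongr; exact abs_add_le _ _)
  have hb1 : |a*(R+1)/(R-1) - 2/t| ≤ 6*a^2*(C₃*δ) := by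
    calc |a*(R+1)/(R-1) - 2/t| ≤ 6*a^2*t := hp1
      _ ≤ 6*a^2*(C₃*δ) := by
          have := mul_le_mul_of_nonneg_left (htρ.trans hρδ) (by positivity : (0:ℝ) ≤ 6*a^2)
          linarith
  have hb2 : |2/t - (2/ρ + 1)| ≤ 9*(C₃*δ) := by
    calc |2/t - (2/ρ + 1)| ≤ 9*ρ := hp2
      _ ≤ 9*(C₃*δ) := by linarith
  calc (σ^2/2) * |a*(R+1)/(R-1) - 2/t + (2/t - (2/ρ + 1)) + (S - μ/(c*δ))|
      ≤ (σ^2/2) * (|a*(R+1)/(R-1) - 2/t| + |2/t - (2/ρ + 1)| + |S - μ/(c*δ)|) :=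
        mul_le_mul_of_nonneg_left htri2 (by positivity)
    _ ≤ (σ^2/2) * (6*a^2*(C₃*δ) + 9*(C₃*δ) + (C₂/c^2)*δ) := by
        have hsum := add_le_add (add_le_add hb1 hb2) hp3
        exact mul_le_mul_of_nonneg_left hsum (by positivity)
    _ = (σ^2/2) * (6*a^2*C₃ + 9*C₃ + C₂/c^2) * δ := by ring
end
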